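/- For every positive integer s and every integer n ≥ s+1, the sequence a_{1,s} satisfies the second-order recurrence a_{1,s}(n) = (n−1)·a_{1,s}(n−1) + (n−s−1)·a_{1,s}(n−2), where the equation is read in the integers (the coefficient n−s−1 may be zero). -/

import Mathlib

/-- The set of permutations `π` of `{0,…,n-1}` (equivalently `{1,…,n}`) such that
`π (i+1) - π i ≠ s` for all valid indices `i`.  For `n = 0` this has exactly one
element (the empty permutation). -/
def noRise (s n : ℕ) : Finset (Equiv.Perm (Fin n)) :=
  Finset.univ.filter fun π =>
    ∀ i j : Fin n, (j : ℕ) = (i : ℕ) + 1 →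
      ((π j : ℕ) : ℤ) - ((π i : ℕ) : ℤ) ≠ (s : ℤ)

def Tfun : ℕ → ℕ → ℤ
  | n, 0 => (Nat.factorial n : ℤ)
  | n, k+1 => Tfun n k - Tfun (n-1) k

lemma Tfun_zero (n : ℕ) : Tfun n 0 = (Nat.factorial n : ℤ) := rfl
lemma Tfun_succ (n k : ℕ) : Tfun n (k+1) = Tfun n k - Tfun (n-1) k := rfl

lemma Tfun_B : ∀ k n : ℕ, 1 ≤ k → k + 1 ≤ n →
    Tfun n k = n * Tfun (n-1) k + k * Tfun (n-2) (k-1) := by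
  intro k
  induction k with
  | zero => omega
  | succ k ih =>
    intro n _ hn
    have h3 : n - 1 - 1 = n - 2 := by omega
    rcases Nat.eq_zero_or_pos k with hk | hk
    · subst hk
      have h2 : 2 ≤ n := by omega
      have e1 : (n.factorial : ℤ) = n * (n-1).factorial := by
        have h : n - 1 + 1 = n := by omega
        rw [← h, Nat.factorial_succ]; push_cast [h]; ring
      have e2 : ((n-1).factorial : ℤ) = ((n:ℤ)-1) * (n-2).factorial := by
        have h : n - 2 + 1 = n - 1 := by omega
        have hc : ((n-2+1 : ℕ) : ℤ) = (n:ℤ) - 1 := by omega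
        rw [← h, Nat.factorial_succ]; push_cast [hc]; ring
      simp only [Nat.add_sub_cancel, Tfun_succ, Tfun_zero, h3]
      rw [e1, e2]; push_cast; ring
    · have h1 := ih n hk (by omega)
      have h2 := ih (n-1) hk (by omega)
      have h4 : n - 1 - 2 = n - 3 := by omega
      have h5 : n - 2 - 1 = n - 3 := by omega
      rw [h3, h4] at h2
      have hd : Tfun (n-2) k = Tfun (n-2) (k-1) - Tfun (n-3) (k-1) := by
        have h : k - 1 + 1 = k := by omega
        rw [← h, Tfun_succ, h5, Nat.add_sub_cancel]
      have hc1 : ((n-1 : ℕ) : ℤ) = (n : ℤ) - 1 := by omega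
      rw [hc1] at h2
      simp only [Nat.add_sub_cancel, Tfun_succ, h3]
      push_cast
      linear_combination h1 - h2 - (k:ℤ) * hd

lemma Tfun_identity (s n : ℕ) (hs : 1 ≤ s) (hn : s + 2 ≤ n) :
    Tfun n (n - s) =
      ((n : ℤ) - 1) * Tfun (n-1) (n-1-s) + ((n:ℤ) - s - 1) * Tfun (n-2) (n-2-s) := by
  set k := n - s with hk
  have hk2 : 2 ≤ k := by omega
  have e1 : Tfun n k = n * Tfun (n-1) k + k * Tfun (n-2) (k-1) :=
    Tfun_B k n (by omega) (by omega)
  have e2 : Tfun (n-1) k = Tfun (n-1) (k-1) - Tfun (n-2) (k-1) := by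
    have h : k - 1 + 1 = k := by omega
    have h2 : n - 1 - 1 = n - 2 := by omega
    rw [← h, Tfun_succ, h2, Nat.add_sub_cancel]
  have e3 : Tfun (n-1) (k-1) = ((n-1:ℕ):ℤ) * Tfun (n-2) (k-1) + ((k-1:ℕ):ℤ) * Tfun (n-3) (k-2) := by
    have := Tfun_B (k-1) (n-1) (by omega) (by omega)
    rwa [show n-1-1 = n-2 from by omega, show n-1-2 = n-3 from by omega,
      show k-1-1 = k-2 from by omega] at this
  have e4 : Tfun (n-2) (k-1) = Tfun (n-2) (k-2) - Tfun (n-3) (k-2) := by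
    have h : k - 2 + 1 = k - 1 := by omega
    rw [← h, Tfun_succ, show n-2-1 = n-3 from by omega]
  rw [show n-1-s = k-1 from by omega, show n-2-s = k-2 from by omega]
  rw [show ((k:ℕ) : ℤ) = (n : ℤ) - s from by omega] at e1
  rw [show ((k-1:ℕ) : ℤ) = (n : ℤ) - s - 1 from by omega,
      show ((n-1:ℕ) : ℤ) = (n : ℤ) - 1 from by omega] at e3
  linear_combination e1 + (n:ℤ) * e2 + e3 + ((n:ℤ) - s - 1) * e4

example : Tfun 5 3 = 64 := by decide

namespace NRAux

/-- list of adjacent pairs -/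
def pairs (l : List ℕ) : List (ℕ × ℕ) := l.dropLast.zip l.tail

lemma pairs_nil : pairs [] = [] := rfl
lemma pairs_single (x : ℕ) : pairs [x] = [] := rfl
lemma pairs_cons_cons (x y : ℕ) (t : List ℕ) :
    pairs (x::y::t) = (x,y) :: pairs (y::t) := by
  simp [pairs, List.dropLast_cons₂]

lemma mem_pairs_proj {x y : ℕ} {l : List ℕ} (h : (x,y) ∈ pairs l) :
    x ∈ l.dropLast ∧ y ∈ l.tail := List.of_mem_zip h

lemma infix_iff_mem_pairs (b c : ℕ) : ∀ (l : List ℕ), ([b,c] <:+: l ↔ (b,c) ∈ pairs l)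
  | [] => by simp [pairs_nil]
  | [x] => by
      simp only [pairs_single, List.not_mem_nil, iff_false]
      rintro ⟨u, v, h⟩
      apply_fun List.length at h
      simp at h; omega
  | (x::y::t) => by
      rw [pairs_cons_cons, List.infix_cons_iff, List.mem_cons,
        ← infix_iff_mem_pairs b c (y::t), List.prefix_cons_iff]
      constructor
      · rintro (h | h)
        · rcases h with h | ⟨t', ht', h⟩
          · simp at h
          · cases ht'
            rcases (List.prefix_cons_iff.1 h) with h' | ⟨t'', ht'', _⟩
            · simp at h'
            · cases ht''; exact Or.inl rfl
        · exact Or.inr h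
      · rintro (h | h)
        · rw [Prod.ext_iff] at h; obtain ⟨rfl, rfl⟩ := h
          exact Or.inl (Or.inr ⟨[c], rfl, by simp⟩)
        · exact Or.inr h

lemma pairs_append : ∀ (u : List ℕ) (x : ℕ) (t : List ℕ),
    pairs (u ++ x :: t) = pairs (u ++ [x]) ++ pairs (x :: t)
  | [], x, t => by simp [pairs_single]
  | [a], x, t => by simp [pairs_cons_cons, pairs_single]
  | (a :: a' :: u), x, t => by
      have ih := pairs_append (a' :: u) x t
      simp only [List.cons_append, pairs_cons_cons] at *
      rw [ih]

/-- insert `q` right after the first occurrence of `p` -/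
def insertAfter (p q : ℕ) : List ℕ → List ℕ
  | [] => []
  | x :: xs => if x = p then x :: q :: xs else x :: insertAfter p q xs

lemma insertAfter_decomp (p q : ℕ) : ∀ (u v : List ℕ), p ∉ u →
    insertAfter p q (u ++ p :: v) = u ++ p :: q :: v
  | [], v, _ => by simp [insertAfter]
  | (a :: u), v, hp => by
      have ha : a ≠ p := fun h => hp (by simp [h])
      simp only [List.cons_append, insertAfter, if_neg ha, List.append_eq]
      rw [insertAfter_decomp p q u v (fun h => hp (List.mem_cons_of_mem _ h))]

lemma erase_decomp (p q : ℕ) (u v : List ℕ) (hq : q ∉ u) (hpq : p ≠ q) :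
    (u ++ p :: q :: v).erase q = u ++ p :: v := by
  rw [List.erase_append_right _ hq, List.erase_cons_tail (by simp [hpq]),
    List.erase_cons_head]

section transfer

variable {u v : List ℕ} {p q b c : ℕ}

/-- nodup facts from the decomposition -/
lemma decomp_facts (h : (u ++ p :: q :: v).Nodup) :
    p ∉ u ∧ q ∉ u ∧ p ≠ q ∧ p ∉ v ∧ q ∉ v := by
  simp only [List.nodup_append, List.nodup_cons, List.disjoint_cons_right,
    List.mem_cons, List.disjoint_cons_right] at h
  obtain ⟨_, ⟨hpqv, hqv, _⟩, hd⟩ := h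
  exact ⟨fun hp => hd p hp p (Or.inl rfl) rfl, fun hq => hd q hq q (Or.inr (Or.inl rfl)) rfl,
    fun e => hpqv (Or.inl e), fun hp => hpqv (Or.inr hp), hqv⟩

lemma not_mem_pairs_concat {w : List ℕ} (hb : b ∉ w) :
    (b,c) ∉ pairs (w ++ [b]) := fun h => hb (by
      have := (mem_pairs_proj h).1
      rwa [List.dropLast_concat] at this)

lemma not_mem_pairs_cons {x : ℕ} {w : List ℕ} (hb : b ∉ w) (hbx : b ≠ x) :
    (b,c) ∉ pairs (x :: w) := fun h => by
  have h1 := (mem_pairs_proj h).1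
  have : b ∈ x :: w := (List.dropLast_sublist _).mem h1
  rcases List.mem_cons.1 this with h' | h'
  · exact hbx h'
  · exact hb h'

/-- membership in pairs of `u ++ [p]` forces first coordinate in `u` -/
lemma mem_pairs_concat_fst {w : List ℕ} (h : (b,c) ∈ pairs (w ++ [p])) : b ∈ w := by
  have := (mem_pairs_proj h).1
  rwa [List.dropLast_concat] at this

-- In the lemmas below, `l = u ++ p::q::v` and `w = u ++ p::v` with `l` nodup.

lemma transfer1 (hl : (u ++ p :: q :: v).Nodup) (hbp : b ≠ p) (hbq : b ≠ q) (hcq : c ≠ q) :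
    ((b,c) ∈ pairs (u ++ p :: q :: v) ↔ (b,c) ∈ pairs (u ++ p :: v)) := by
  rw [pairs_append, pairs_cons_cons, pairs_append (x := p) (t := v)]
  simp only [List.mem_append, List.mem_cons]
  rcases v with _ | ⟨c₀, v'⟩
  · simp only [pairs_single, List.not_mem_nil, or_false]
    constructor
    · rintro (h | h)
      · exact h
      · exact absurd (congrArg Prod.snd h) (by simpa using hcq)
    · exact fun h => Or.inl h
  · rw [pairs_cons_cons, pairs_cons_cons]
    simp only [List.mem_cons]
    constructor
    · rintro (h | h | h | h)
      · exact Or.inl h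
      · exact absurd (congrArg Prod.snd h) (by simpa using hcq)
      · exact absurd (congrArg Prod.fst h) (by simpa using hbq)
      · tauto
    · rintro (h | h | h)
      · exact Or.inl h
      · exact absurd (congrArg Prod.fst h) (by simpa using hbp)
      · tauto

lemma transfer2 (hl : (u ++ p :: q :: v).Nodup) (c : ℕ) :
    ((q,c) ∈ pairs (u ++ p :: q :: v) ↔ (p,c) ∈ pairs (u ++ p :: v)) := by
  obtain ⟨hpu, hqu, hpq, hpv, hqv⟩ := decomp_facts hl
  rw [pairs_append, pairs_cons_cons, pairs_append (x := p) (t := v)]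
  simp only [List.mem_append, List.mem_cons]
  have hqP : (q,c) ∉ pairs (u ++ [p]) := fun h => hqu (mem_pairs_concat_fst h)
  have hpP : (p,c) ∉ pairs (u ++ [p]) := not_mem_pairs_concat hpu
  rcases v with _ | ⟨c₀, v'⟩
  · simp only [pairs_single, List.not_mem_nil, or_false]
    constructor
    · rintro (h | h)
      · exact absurd h hqP
      · exact absurd (congrArg Prod.fst h) (by simpa using hpq.symm)
    · rintro h; exact absurd h hpP
  · rw [pairs_cons_cons, pairs_cons_cons]
    simp only [List.mem_cons]
    have hq' : (q,c) ∉ pairs (c₀ :: v') := by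
      apply not_mem_pairs_cons
      · exact fun h => hqv (List.mem_cons_of_mem _ h)
      · exact fun h => hqv (by simp [h])
    have hp' : (p,c) ∉ pairs (c₀ :: v') := by
      apply not_mem_pairs_cons
      · exact fun h => hpv (List.mem_cons_of_mem _ h)
      · exact fun h => hpv (by simp [h])
    constructor
    · rintro (h | h | h | h)
      · exact absurd h hqP
      · exact absurd (congrArg Prod.fst h) (by simpa using hpq.symm)
      · exact Or.inr (Or.inl (by rw [Prod.ext_iff] at h ⊢; exact ⟨rfl, h.2⟩))
      · exact absurd h hq'
    · rintro (h | h | h)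
      · exact absurd h hpP
      · exact Or.inr (Or.inr (Or.inl (by rw [Prod.ext_iff] at h ⊢; exact ⟨rfl, h.2⟩)))
      · exact absurd h hp'

lemma transfer3 (hl : (u ++ p :: q :: v).Nodup)
    (h : (p,c) ∈ pairs (u ++ p :: q :: v)) : c = q := by
  obtain ⟨hpu, hqu, hpq, hpv, hqv⟩ := decomp_facts hl
  rw [pairs_append, pairs_cons_cons] at h
  simp only [List.mem_append, List.mem_cons] at h
  rcases h with h | h | h
  · exact absurd h (not_mem_pairs_concat hpu)
  · exact (congrArg Prod.snd h)
  · exfalso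
    rcases v with _ | ⟨c₀, v'⟩
    · simp [pairs_single] at h
    · rw [pairs_cons_cons] at h
      rcases List.mem_cons.1 h with h' | h'
      · exact hpq (congrArg Prod.fst h')
      · exact not_mem_pairs_cons (fun hh => hpv (List.mem_cons_of_mem _ hh))
          (fun hh => hpv (by simp [hh])) h'

lemma transfer4 (hl : (u ++ p :: q :: v).Nodup)
    (h : (b,q) ∈ pairs (u ++ p :: q :: v)) : b = p := by
  obtain ⟨hpu, hqu, hpq, hpv, hqv⟩ := decomp_facts hl
  rw [pairs_append, pairs_cons_cons] at h
  simp only [List.mem_append, List.mem_cons] at h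
  rcases h with h | h | h
  · exfalso
    have := (mem_pairs_proj h).2
    have : q ∈ u ++ [p] := (List.tail_sublist _).mem this
    rcases List.mem_append.1 this with h' | h'
    · exact hqu h'
    · exact hpq (List.mem_singleton.1 h').symm
  · exact (congrArg Prod.fst h)
  · exfalso
    rcases v with _ | ⟨c₀, v'⟩
    · simp [pairs_single] at h
    · rw [pairs_cons_cons] at h
      rcases List.mem_cons.1 h with h' | h'
      · have hc : q = c₀ := congrArg Prod.snd h'
        apply hqv; rw [hc]; exact List.mem_cons_self
      · have hq2 := (mem_pairs_proj h').2
        have : q ∈ v' := hq2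
        exact hqv (List.mem_cons_of_mem _ this)

end transfer

end NRAux

namespace NRAux

noncomputable def words (A : Finset ℕ) : Finset (List ℕ) := A.toList.permutations.toFinset

lemma mem_words {A : Finset ℕ} {l : List ℕ} : l ∈ words A ↔ l.Perm A.toList := by
  simp [words, List.mem_permutations]

lemma card_words (A : Finset ℕ) : (words A).card = A.card.factorial := by
  rw [words, List.toFinset_card_of_nodup (List.nodup_permutations _ A.nodup_toList),
    List.length_permutations, Finset.length_toList]

lemma words_multiset {A : Finset ℕ} {l : List ℕ} (h : l ∈ words A) :
    (l : Multiset ℕ) = A.val := by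
  rw [mem_words] at h
  calc (l : Multiset ℕ) = (A.toList : Multiset ℕ) := Multiset.coe_eq_coe.2 h
  _ = A.val := Finset.coe_toList A

lemma mem_words_of_multiset {A : Finset ℕ} {l : List ℕ} (h : (l : Multiset ℕ) = A.val) :
    l ∈ words A := by
  rw [mem_words, ← Multiset.coe_eq_coe, h]
  exact (Finset.coe_toList A).symm

lemma nodup_of_mem_words {A : Finset ℕ} {l : List ℕ} (h : l ∈ words A) : l.Nodup :=
  ((mem_words.1 h).symm.nodup A.nodup_toList)

def allowed (E : Finset (ℕ × ℕ)) (l : List ℕ) : Prop := ∀ e ∈ E, e ∉ pairs l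

instance (E : Finset (ℕ × ℕ)) : DecidablePred (allowed E) := fun l => by
  unfold allowed; infer_instance

noncomputable def Ncount (A : Finset ℕ) (E : Finset (ℕ × ℕ)) : ℕ :=
  ((words A).filter (allowed E)).card

/-- hypotheses on the forbidden adjacency set -/
def Good (A : Finset ℕ) (E : Finset (ℕ × ℕ)) : Prop :=
  (∀ e ∈ E, e.1 ∈ A ∧ e.2 ∈ A) ∧
  (∀ e ∈ E, e.1 < e.2) ∧
  (∀ e ∈ E, ∀ e' ∈ E, e.1 = e'.1 → e = e') ∧
  (∀ e ∈ E, ∀ e' ∈ E, e.2 = e'.2 → e = e')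

theorem count_main : ∀ (k : ℕ) (A : Finset ℕ) (E : Finset (ℕ × ℕ)),
    Good A E → E.card = k → (Ncount A E : ℤ) = Tfun A.card k := by
  intro k
  induction k with
  | zero =>
    intro A E _ hE
    rw [Finset.card_eq_zero] at hE
    subst hE
    have : (words A).filter (allowed ∅) = words A := by
      apply Finset.filter_true_of_mem
      intro l _ e he
      simp at he
    unfold Ncount
    rw [this, card_words, Tfun_zero]
  | succ k ih =>
    intro A E hG hE
    obtain ⟨hsub, hgr, hinj, hcoinj⟩ := hG
    have hne : E.Nonempty := Finset.card_pos.1 (by omega)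
    obtain ⟨e, heE, hemax⟩ := Finset.exists_max_image E Prod.snd hne
    obtain ⟨p, q⟩ := e
    have hpq : p < q := hgr (p,q) heE
    have hpA : p ∈ A := (hsub _ heE).1
    have hqA : q ∈ A := (hsub _ heE).2
    -- q is not a source
    have hqns : ∀ c, (q, c) ∉ E := by
      intro c hc
      have h1 : q < c := hgr _ hc
      have h2 : c ≤ q := hemax _ hc
      omega
    set E' := E.erase (p,q) with hE'
    have hE'card : E'.card = k := by
      rw [hE', Finset.card_erase_of_mem heE, hE]; omega
    have hE'sub : E' ⊆ E := Finset.erase_subset _ _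
    have hGE' : Good A E' :=
      ⟨fun e he => hsub e (hE'sub he), fun e he => hgr e (hE'sub he),
       fun e he e' he' => hinj e (hE'sub he) e' (hE'sub he'),
       fun e he e' he' => hcoinj e (hE'sub he) e' (hE'sub he')⟩
    -- the translated edge set
    set B := E.filter (fun f => f.1 ≠ p ∧ f.2 ≠ q) with hB
    have hBE' : B = E' := by
      ext f
      simp only [hB, hE', Finset.mem_filter, Finset.mem_erase]
      constructor
      · rintro ⟨hf, h1, _⟩
        exact ⟨fun h => h1 (by rw [h]), hf⟩
      · rintro ⟨hne', hf⟩
        refine ⟨hf, fun h => hne' ?_, fun h => hne' ?_⟩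
        · exact hinj f hf (p,q) heE h
        · exact hcoinj f hf (p,q) heE h
    set G := B.image (fun f => (if f.1 = q then p else f.1, f.2)) with hGdef
    have hGmem : ∀ x c, (x, c) ∈ G ↔
        ∃ b, (b, c) ∈ E ∧ b ≠ p ∧ c ≠ q ∧ x = (if b = q then p else b) := by
      intro x c
      simp only [hGdef, hB, Finset.mem_image, Finset.mem_filter]
      constructor
      · rintro ⟨⟨b, c'⟩, ⟨hf, h1, h2⟩, hx⟩
        rw [Prod.ext_iff] at hx
        obtain ⟨hx1, hx2⟩ := hx
        simp only at hx1 hx2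
        subst hx2
        exact ⟨b, hf, h1, h2, hx1.symm⟩
      · rintro ⟨b, hf, h1, h2, hx⟩
        exact ⟨(b, c), ⟨hf, h1, h2⟩, by simp [hx.symm]⟩
    have hGcard : G.card = k := by
      rw [hGdef, Finset.card_image_of_injOn, hBE', hE'card]
      intro f hf f' hf' hff
      simp only [hB, Finset.coe_filter, Set.mem_setOf_eq] at hf hf'
      rw [Prod.ext_iff] at hff
      obtain ⟨_, h2⟩ := hff
      exact hcoinj f hf.1 f' hf'.1 h2
    have hGG : Good (A.erase q) G := by
      refine ⟨?_, ?_, ?_, ?_⟩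
      · rintro ⟨x, c⟩ hx
        obtain ⟨b, hbE, hb1, hb2, hx⟩ := (hGmem x c).1 hx
        constructor
        · by_cases hbq : b = q
          · simp only [hx, if_pos hbq]
            exact Finset.mem_erase.2 ⟨fun h => (by omega : p ≠ q) h, hpA⟩
          · simp only [hx, if_neg hbq]
            exact Finset.mem_erase.2 ⟨hbq, (hsub _ hbE).1⟩
        · exact Finset.mem_erase.2 ⟨hb2, (hsub _ hbE).2⟩
      · rintro ⟨x, c⟩ hx
        obtain ⟨b, hbE, hb1, hb2, hx⟩ := (hGmem x c).1 hx
        have := hgr _ hbE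
        by_cases hbq : b = q
        · subst hbq; simp only [hx, if_pos rfl]; simpa using by omega
        · simp only [hx, if_neg hbq]; simpa using this
      · rintro ⟨x, c⟩ hx ⟨x', c'⟩ hx' hxx
        simp only at hxx
        subst hxx
        obtain ⟨b, hbE, hb1, hb2, hx⟩ := (hGmem x c).1 hx
        obtain ⟨b', hbE', hb1', hb2', hx'⟩ := (hGmem x c').1 hx'
        have hbb : b = b' := by
          by_cases hbq : b = q <;> by_cases hbq' : b' = q
          · rw [hbq, hbq']
          · exfalso; rw [if_pos hbq] at hx; rw [if_neg hbq'] at hx'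
            exact hb1' (by rw [← hx', hx])
          · exfalso; rw [if_neg hbq] at hx; rw [if_pos hbq'] at hx'
            exact hb1 (by rw [← hx, hx'])
          · rw [if_neg hbq] at hx; rw [if_neg hbq'] at hx'
            exact hx.symm.trans hx'
        subst hbb
        have := hinj _ hbE _ hbE' rfl
        rw [Prod.ext_iff] at this
        have h2 : c = c' := this.2
        simp [h2]
      · rintro ⟨x, c⟩ hx ⟨x', c'⟩ hx' hcc
        simp only at hcc
        subst hcc
        obtain ⟨b, hbE, hb1, hb2, hx⟩ := (hGmem x c).1 hx
        obtain ⟨b', hbE', hb1', hb2', hx'⟩ := (hGmem x' c).1 hx'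
        have := hcoinj _ hbE _ hbE' rfl
        rw [Prod.ext_iff] at this
        simp only at this
        rw [Prod.ext_iff]
        refine ⟨?_, rfl⟩
        simp only [hx, hx', this.1]
    -- split the count
    have hsplit : Ncount A E' = Ncount A E +
        ((words A).filter (fun l => allowed E' l ∧ (p,q) ∈ pairs l)).card := by
      have h1 := Finset.card_filter_add_card_filter_not
        (s := (words A).filter (allowed E')) (fun l => (p,q) ∈ pairs l)
      rw [Finset.filter_filter, Finset.filter_filter] at h1
      have h2 : (words A).filter (fun a => allowed E' a ∧ (p,q) ∉ pairs a)
          = (words A).filter (allowed E) := by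
        apply Finset.filter_congr
        intro l _
        constructor
        · rintro ⟨h3, h4⟩ f hf
          rcases eq_or_ne f (p,q) with rfl | hfe
          · exact h4
          · exact h3 f (Finset.mem_erase.2 ⟨hfe, hf⟩)
        · intro h3
          exact ⟨fun f hf => h3 f (hE'sub hf), h3 _ heE⟩
      rw [h2] at h1
      unfold Ncount
      omega
    -- the bijection
    have hbij : ((words A).filter (fun l => allowed E' l ∧ (p,q) ∈ pairs l)).card
        = Ncount (A.erase q) G := by
      unfold Ncount
      apply Finset.card_bij' (fun l _ => l.erase q) (fun m _ => insertAfter p q m)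
      · -- forward well-defined
        intro l hl
        rw [Finset.mem_filter] at hl
        obtain ⟨hlw, hall, hpq'⟩ := hl
        have hnd : l.Nodup := nodup_of_mem_words hlw
        obtain ⟨u, v, rfl⟩ : ∃ u v, l = u ++ p :: q :: v := by
          obtain ⟨u, v, h⟩ := (infix_iff_mem_pairs p q l).2 hpq'
          exact ⟨u, v, by rw [← h]; simp⟩
        obtain ⟨hpu, hqu, hpq2, hpv, hqv⟩ := decomp_facts hnd
        rw [erase_decomp p q u v hqu hpq2]
        rw [Finset.mem_filter]
        constructor
        · apply mem_words_of_multiset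
          have h1 : ((u ++ p :: q :: v : List ℕ) : Multiset ℕ) = A.val := words_multiset hlw
          rw [Finset.erase_val, ← h1, Multiset.coe_erase (u ++ p :: q :: v) q,
            erase_decomp p q u v hqu hpq2]
        · rintro ⟨x, c⟩ hxc
          obtain ⟨b, hbE, hb1, hb2, hx⟩ := (hGmem x c).1 hxc
          by_cases hbq : b = q
          · rw [hx, if_pos hbq]
            rw [← transfer2 hnd c]
            rw [hbq] at hbE
            refine hall (q, c) (Finset.mem_erase.2 ⟨?_, hbE⟩)
            intro h
            rw [Prod.ext_iff] at h
            simp only at h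
            omega
          · rw [hx, if_neg hbq]
            rw [← transfer1 hnd hb1 hbq hb2]
            refine hall (b, c) (Finset.mem_erase.2 ⟨?_, hbE⟩)
            intro h
            rw [Prod.ext_iff] at h
            simp only at h
            omega
      · -- backward well-defined
        intro m hm
        rw [Finset.mem_filter] at hm
        obtain ⟨hmw, hallG⟩ := hm
        have hndm : m.Nodup := nodup_of_mem_words hmw
        have hpm : p ∈ m := by
          have : (m : Multiset ℕ) = (A.erase q).val := words_multiset hmw
          have hp' : p ∈ (A.erase q) := Finset.mem_erase.2 ⟨by omega, hpA⟩
          have : p ∈ (m : Multiset ℕ) := by rw [this]; exact hp'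
          simpa using this
        have hqm : q ∉ m := by
          intro hq
          have : (m : Multiset ℕ) = (A.erase q).val := words_multiset hmw
          have : q ∈ (A.erase q) := by
            have : q ∈ (m : Multiset ℕ) := by simpa using hq
            rwa [words_multiset hmw] at this
          simp at this
        obtain ⟨u, v, rfl⟩ := List.append_of_mem hpm
        have hpu : p ∉ u := by
          intro h
          rw [List.nodup_append] at hndm
          exact hndm.2.2 p h p (by simp) rfl
        rw [insertAfter_decomp p q u v hpu]
        have hlm : ((u ++ p :: q :: v : List ℕ) : Multiset ℕ) = A.val := by
          have h1 : ((u ++ p :: v : List ℕ) : Multiset ℕ) = (A.erase q).val :=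
            words_multiset hmw
          have h2 : ((u ++ p :: q :: v : List ℕ) : Multiset ℕ)
              = q ::ₘ ((u ++ p :: v : List ℕ) : Multiset ℕ) := by
            rw [Multiset.cons_coe, Multiset.coe_eq_coe]
            have := List.perm_middle (a := q) (l₁ := u ++ [p]) (l₂ := v)
            simpa using this
          rw [h2, h1, Finset.erase_val, Multiset.cons_erase (by simpa using hqA)]
        have hndl : (u ++ p :: q :: v).Nodup := by
          have : ((u ++ p :: q :: v : List ℕ) : Multiset ℕ).Nodup := by
            rw [hlm]; exact A.nodup
          simpa using this
        rw [Finset.mem_filter]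
        refine ⟨mem_words_of_multiset hlm, ?_, ?_⟩
        · rintro ⟨b, c⟩ hbc
          rw [Finset.mem_erase] at hbc
          obtain ⟨hbcne, hbcE⟩ := hbc
          by_cases hbp : b = p
          · subst hbp
            intro hmem
            have := transfer3 hndl hmem
            exact hbcne (by rw [this])
          · by_cases hbq : b = q
            · rw [hbq]
              rw [transfer2 hndl c]
              rw [hbq] at hbcE
              have hcq : c ≠ q := by have := hgr _ hbcE; simp only at this; omega
              have : (p, c) ∈ G := (hGmem p c).2 ⟨q, hbcE, by omega, hcq, by simp⟩
              exact hallG _ this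
            · by_cases hcq : c = q
              · subst hcq
                intro hmem
                exact hbp (transfer4 hndl hmem)
              · rw [transfer1 hndl hbp hbq hcq]
                have : (b, c) ∈ G := (hGmem b c).2 ⟨b, hbcE, hbp, hcq, by simp [hbq]⟩
                exact hallG _ this
        · rw [pairs_append, pairs_cons_cons]
          simp
      · -- left inverse
        intro l hl
        rw [Finset.mem_filter] at hl
        obtain ⟨hlw, _, hpq'⟩ := hl
        have hnd : l.Nodup := nodup_of_mem_words hlw
        obtain ⟨u, v, rfl⟩ : ∃ u v, l = u ++ p :: q :: v := by
          obtain ⟨u, v, h⟩ := (infix_iff_mem_pairs p q l).2 hpq'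
          exact ⟨u, v, by rw [← h]; simp⟩
        obtain ⟨hpu, hqu, hpq2, hpv, hqv⟩ := decomp_facts hnd
        rw [erase_decomp p q u v hqu hpq2, insertAfter_decomp p q u v hpu]
      · -- right inverse
        intro m hm
        rw [Finset.mem_filter] at hm
        obtain ⟨hmw, _⟩ := hm
        have hndm : m.Nodup := nodup_of_mem_words hmw
        have hpm : p ∈ m := by
          have h1 : (m : Multiset ℕ) = (A.erase q).val := words_multiset hmw
          have hp' : p ∈ (A.erase q) := Finset.mem_erase.2 ⟨by omega, hpA⟩
          have : p ∈ (m : Multiset ℕ) := by rw [h1]; exact hp'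
          simpa using this
        obtain ⟨u, v, rfl⟩ := List.append_of_mem hpm
        have hpu : p ∉ u := by
          intro h
          rw [List.nodup_append] at hndm
          exact hndm.2.2 p h p (by simp) rfl
        have hqu : q ∉ u ++ p :: v := by
          intro hq
          have : q ∈ (A.erase q) := by
            have : q ∈ ((u ++ p :: v : List ℕ) : Multiset ℕ) := by simpa using hq
            rwa [words_multiset hmw] at this
          simp at this
        rw [insertAfter_decomp p q u v hpu,
          erase_decomp p q u v (fun h => hqu (by simp [h])) (by omega)]
    -- conclude
    have hq' : q ∈ A := hqA
    have hcard : (A.erase q).card = A.card - 1 := Finset.card_erase_of_mem hq'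
    have hA1 : 1 ≤ A.card := Finset.card_pos.2 ⟨q, hq'⟩
    have ihE' := ih A E' hGE' hE'card
    have ihG := ih (A.erase q) G hGG hGcard
    rw [hcard] at ihG
    rw [Tfun_succ]
    have : (Ncount A E' : ℤ) = (Ncount A E : ℤ) + (Ncount (A.erase q) G : ℤ) := by
      rw [hsplit, hbij]; push_cast; ring
    rw [ihE', ihG] at this
    omega

end NRAux

namespace NRAux

lemma mem_pairs_iff_getElem (l : List ℕ) (b c : ℕ) :
    (b,c) ∈ pairs l ↔ ∃ i, ∃ _ : i + 1 < l.length, l[i] = b ∧ l[i+1] = c := by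
  unfold pairs
  rw [List.mem_iff_getElem]
  constructor
  · rintro ⟨i, h, hi⟩
    have hlen : i + 1 < l.length := by
      rw [List.length_zip, List.length_dropLast, List.length_tail] at h
      omega
    rw [List.getElem_zip, Prod.ext_iff] at hi
    simp only at hi
    rw [List.getElem_dropLast, List.getElem_tail] at hi
    exact ⟨i, hlen, hi.1, hi.2⟩
  · rintro ⟨i, h, hb, hc⟩
    refine ⟨i, ?_, ?_⟩
    · rw [List.length_zip, List.length_dropLast, List.length_tail]; omega
    · rw [List.getElem_zip, Prod.ext_iff]
      rw [List.getElem_dropLast, List.getElem_tail]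
      exact ⟨hb, hc⟩

def E0 (s n : ℕ) : Finset (ℕ × ℕ) := (Finset.range (n - s)).image (fun x => (x, x + s))

lemma E0_mem {s n : ℕ} {e : ℕ × ℕ} : e ∈ E0 s n ↔ ∃ x < n - s, e = (x, x + s) := by
  simp only [E0, Finset.mem_image, Finset.mem_range]
  constructor
  · rintro ⟨x, hx, rfl⟩; exact ⟨x, hx, rfl⟩
  · rintro ⟨x, hx, rfl⟩; exact ⟨x, hx, rfl⟩

lemma E0_card (s n : ℕ) : (E0 s n).card = n - s := by
  rw [E0, Finset.card_image_of_injOn, Finset.card_range]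
  intro x _ y _ h
  exact congrArg Prod.fst h

lemma E0_good (s n : ℕ) (hs : 1 ≤ s) : Good (Finset.range n) (E0 s n) := by
  refine ⟨?_, ?_, ?_, ?_⟩
  · rintro e he
    obtain ⟨x, hx, rfl⟩ := E0_mem.1 he
    constructor <;> simp only [Finset.mem_range] <;> omega
  · rintro e he
    obtain ⟨x, hx, rfl⟩ := E0_mem.1 he
    simp only; omega
  · rintro e he e' he' h
    obtain ⟨x, hx, rfl⟩ := E0_mem.1 he
    obtain ⟨y, hy, rfl⟩ := E0_mem.1 he'
    simp only at h
    simp [h]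
  · rintro e he e' he' h
    obtain ⟨x, hx, rfl⟩ := E0_mem.1 he
    obtain ⟨y, hy, rfl⟩ := E0_mem.1 he'
    simp only at h
    have : x = y := by omega
    simp [this]

lemma noRise_card_eq (s n : ℕ) (hs : 1 ≤ s) :
    (noRise s n).card = Ncount (Finset.range n) (E0 s n) := by
  unfold Ncount
  apply Finset.card_bij (fun π _ => List.ofFn (fun i : Fin n => ((π : Equiv.Perm (Fin n)) i : ℕ)))
  · -- maps into target
    intro π hπ
    rw [noRise, Finset.mem_filter] at hπ
    obtain ⟨-, hcond⟩ := hπ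
    have hnd : (List.ofFn (fun i : Fin n => (π i : ℕ))).Nodup := by
      rw [List.nodup_ofFn]
      intro i j h
      exact π.injective (Fin.ext h)
    rw [Finset.mem_filter]
    constructor
    · rw [mem_words]
      apply List.perm_of_nodup_nodup_toFinset_eq hnd (Finset.nodup_toList _)
      rw [Finset.toList_toFinset]
      ext x
      simp only [List.mem_toFinset, List.mem_ofFn, Set.mem_range, Finset.mem_range]
      constructor
      · rintro ⟨i, rfl⟩; exact (π i).isLt
      · intro hx; exact ⟨π.symm ⟨x, hx⟩, by simp⟩
    · rintro ⟨b, c⟩ he hmem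
      obtain ⟨x, hx, hxe⟩ := E0_mem.1 he
      rw [Prod.ext_iff] at hxe
      simp only at hxe
      obtain ⟨rfl, rfl⟩ := hxe
      rw [mem_pairs_iff_getElem] at hmem
      obtain ⟨i, hi, h1, h2⟩ := hmem
      rw [List.length_ofFn] at hi
      rw [List.getElem_ofFn] at h1 h2
      have := hcond ⟨i, by omega⟩ ⟨i+1, hi⟩ rfl
      apply this
      rw [h1, h2]
      push_cast
      ring
  · -- injectivity
    intro π hπ π' hπ' h
    rw [List.ofFn_inj] at h
    ext i
    exact congrFun h i ▸ rfl
  · -- surjectivity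
    intro l hl
    rw [Finset.mem_filter] at hl
    obtain ⟨hlw, hall⟩ := hl
    have hperm := mem_words.1 hlw
    have hnd : l.Nodup := nodup_of_mem_words hlw
    have hlen : l.length = n := by
      rw [hperm.length_eq, Finset.length_toList, Finset.card_range]
    have hmem : ∀ x ∈ l, x < n := by
      intro x hx
      have : x ∈ (Finset.range n).toList := hperm.mem_iff.1 hx
      rw [Finset.mem_toList, Finset.mem_range] at this
      exact this
    have hget : ∀ i : Fin n, l[(i : ℕ)]'(by omega) < n := fun i =>
      hmem _ (List.getElem_mem _)
    set f : Fin n → Fin n := fun i => ⟨l[(i : ℕ)]'(by omega), hget i⟩ with hf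
    have hinj : Function.Injective f := by
      intro i j h
      rw [hf] at h
      have h2 : l[(i:ℕ)]'(by omega) = l[(j:ℕ)]'(by omega) := congrArg Fin.val h
      have := (List.Nodup.getElem_inj_iff hnd).1 h2
      exact Fin.ext this
    have hbij := Finite.injective_iff_bijective.1 hinj
    set π := Equiv.ofBijective f hbij with hπdef
    have hπval : ∀ i : Fin n, (π i : ℕ) = l[(i : ℕ)]'(by omega) := fun i => rfl
    have hofn : List.ofFn (fun i : Fin n => (π i : ℕ)) = l := by
      apply List.ext_getElem
      · rw [List.length_ofFn, hlen]
      · intro i h1 h2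
        rw [List.getElem_ofFn]
        exact hπval _
    refine ⟨π, ?_, hofn⟩
    rw [noRise, Finset.mem_filter]
    refine ⟨Finset.mem_univ _, ?_⟩
    rintro i j hij heq
    set x := (π i : ℕ) with hx
    have hxn : x < n := (π i).isLt
    have hyn : (π j : ℕ) < n := (π j).isLt
    have hyx : (π j : ℕ) = x + s := by omega
    have hE : (x, x + s) ∈ E0 s n := E0_mem.2 ⟨x, by omega, rfl⟩
    apply hall _ hE
    rw [mem_pairs_iff_getElem]
    refine ⟨(i : ℕ), by omega, ?_, ?_⟩
    · exact (hπval i).symm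
    · simp only [← hij]
      rw [← hπval j]
      exact hyx

lemma noRise_eq_Tfun (s n : ℕ) (hs : 1 ≤ s) :
    ((noRise s n).card : ℤ) = Tfun n (n - s) := by
  rw [noRise_card_eq s n hs,
    count_main (n - s) (Finset.range n) (E0 s n) (E0_good s n hs) (E0_card s n),
    Finset.card_range]

end NRAux


/-- For `s ≥ 1` and `n ≥ s + 1`,
`a_{1,s}(n) = (n-1)·a_{1,s}(n-1) + (n-s-1)·a_{1,s}(n-2)`, read in the integers. -/
theorem noRise_recurrence (s n : ℕ) (hs : 1 ≤ s) (hn : s + 1 ≤ n) :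
    ((noRise s n).card : ℤ) =
      ((n : ℤ) - 1) * (noRise s (n - 1)).card +
        ((n : ℤ) - (s : ℤ) - 1) * (noRise s (n - 2)).card := by
  rcases eq_or_lt_of_le hn with heq | hlt
  · -- n = s + 1
    subst heq
    rw [NRAux.noRise_eq_Tfun s (s+1) hs, NRAux.noRise_eq_Tfun s (s+1-1) hs]
    rw [show s + 1 - s = 1 from by omega, show s + 1 - 1 = s from by omega,
      show s - s = 0 from by omega]
    rw [Tfun_succ, Tfun_zero, Tfun_zero,
      show s + 1 - 1 = s from by omega, Tfun_zero]
    have : ((s+1).factorial : ℤ) = (s + 1) * s.factorial := by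
      rw [Nat.factorial_succ]; push_cast; ring
    rw [this]
    push_cast
    ring
  · -- n ≥ s + 2
    have h2 : s + 2 ≤ n := hlt
    rw [NRAux.noRise_eq_Tfun s n hs, NRAux.noRise_eq_Tfun s (n-1) hs,
      NRAux.noRise_eq_Tfun s (n-2) hs]
    exact Tfun_identity s n hs h2
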